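/- Let A and B be nonempty closed convex subsets of X, set T := P_B ∘ P_A, and suppose T has no fixed point. Fix x ∈ X and define b₀ := x, b_{n+1} := T(b_n). Set R := (rec A) ∩ (rec B). Then every cluster point of the (eventually well-defined) sequence (b_n/‖b_n‖) lies in R ∩ R^⊕; moreover R ∩ R^⊕ is a closed convex cone that properly contains {0}. -/

import Mathlib

open Filter Topology RealInnerProductSpace

variable {X : Type*} [NormedAddCommGroup X] [InnerProductSpace ℝ X] [FiniteDimensional ℝ X]

/-- `P` is the projector onto the set `C`: `P x` is a point of `C` nearest to `x`. -/
def IsProjector (C : Set X) (P : X → X) : Prop :=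
  ∀ x : X, P x ∈ C ∧ ∀ y ∈ C, ‖x - P x‖ ≤ ‖x - y‖

/-- The recession cone `rec S = {x : x + S ⊆ S}` of a set `S`. -/
def recCone (S : Set X) : Set X := {x : X | ∀ s ∈ S, x + s ∈ S}

/-- `S^⊕ = −(S^⊖) = {x : ⟪x, s⟫ ≥ 0 for all s ∈ S}`. -/
def plusCone (S : Set X) : Set X := {x : X | ∀ s ∈ S, (0 : ℝ) ≤ inner ℝ x s}

lemma min_var {C : Set X} (hC : Convex ℝ C) {z y : X} (hy : y ∈ C)
    (hmin : ∀ w ∈ C, ‖z - y‖ ≤ ‖z - w‖) : ∀ w ∈ C, ⟪z - y, w - y⟫ ≤ 0 := by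
  haveI : Nonempty C := ⟨⟨y, hy⟩⟩
  have hd : ‖z - y‖ = ⨅ w : C, ‖z - w‖ := by
    refine le_antisymm (le_ciInf fun w => hmin w w.2) ?_
    have hb : BddBelow (Set.range fun w : C => ‖z - w‖) :=
      ⟨0, by rintro _ ⟨w, rfl⟩; exact norm_nonneg _⟩
    exact ciInf_le hb ⟨y, hy⟩
  exact (norm_eq_iInf_iff_real_inner_le_zero hC hy).1 hd

lemma var_ineq {C : Set X} (hC : Convex ℝ C) {P : X → X} (hP : IsProjector C P) (u : X) :
    ∀ w ∈ C, ⟪u - P u, w - P u⟫ ≤ 0 :=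
  min_var hC (hP u).1 (hP u).2

lemma proj_eq_of_min {C : Set X} (hC : Convex ℝ C) {P : X → X} (hP : IsProjector C P)
    {z y : X} (hy : y ∈ C) (hmin : ∀ w ∈ C, ‖z - y‖ ≤ ‖z - w‖) : P z = y := by
  have h1 := var_ineq hC hP z y hy
  have h2 := min_var hC hy hmin (P z) (hP z).1
  have key : ‖y - P z‖ ^ 2 ≤ 0 := by
    have e : ⟪z - P z, y - P z⟫ + ⟪z - y, P z - y⟫ = ‖y - P z‖ ^ 2 := by
      rw [← real_inner_self_eq_norm_sq]
      simp only [inner_sub_left, inner_sub_right]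
      ring_nf
    linarith
  have h0 : y - P z = 0 := by
    have hn := norm_nonneg (y - P z)
    have : ‖y - P z‖ = 0 := by nlinarith
    simpa using this
  exact (sub_eq_zero.1 h0).symm

lemma proj_nonexp {C : Set X} (hC : Convex ℝ C) {P : X → X} (hP : IsProjector C P)
    (u v : X) : ‖P u - P v‖ ≤ ‖u - v‖ := by
  have h1 := var_ineq hC hP u (P v) (hP v).1
  have h2 := var_ineq hC hP v (P u) (hP u).1
  have key : ‖P u - P v‖ ^ 2 ≤ ⟪u - v, P u - P v⟫ := by
    have e : ⟪u - P u, P v - P u⟫ + ⟪v - P v, P u - P v⟫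
        = ‖P u - P v‖ ^ 2 - ⟪u - v, P u - P v⟫ := by
      rw [← real_inner_self_eq_norm_sq]
      simp only [inner_sub_left, inner_sub_right]
      ring_nf
    linarith
  have hle := real_inner_le_norm (u - v) (P u - P v)
  nlinarith [norm_nonneg (P u - P v), norm_nonneg (u - v)]

lemma recCone_closed {S : Set X} (hS : IsClosed S) : IsClosed (recCone S) := by
  have : recCone S = ⋂ s ∈ S, (· + s) ⁻¹' S := by
    ext x; simp [recCone]
  rw [this]
  exact isClosed_biInter fun s _ => hS.preimage (continuous_id.add continuous_const)

lemma plusCone_closed (S : Set X) : IsClosed (plusCone S) := by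
  have : plusCone S = ⋂ s ∈ S, {x : X | (0:ℝ) ≤ inner ℝ x s} := by
    ext x; simp [plusCone]
  rw [this]
  exact isClosed_biInter fun s _ =>
    isClosed_le continuous_const (continuous_id.inner continuous_const)

lemma recCone_convex {S : Set X} (hS : Convex ℝ S) : Convex ℝ (recCone S) := by
  intro u hu v hv a c ha hc hac s hs
  have := hS (hu s hs) (hv s hs) ha hc hac
  have e : a • (u + s) + c • (v + s) = a • u + c • v + s := by
    rw [smul_add, smul_add]
    rw [show a • u + a • s + (c • v + c • s) = a • u + c • v + (a + c) • s by
      rw [add_smul]; abel, hac, one_smul]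
  rwa [e] at this

lemma plusCone_convex (S : Set X) : Convex ℝ (plusCone S) := by
  intro u hu v hv a c ha hc _ s hs
  have : (0:ℝ) ≤ a * inner ℝ u s + c * inner ℝ v s :=
    add_nonneg (mul_nonneg ha (hu s hs)) (mul_nonneg hc (hv s hs))
  simpa [inner_add_left, real_inner_smul_left] using this

lemma recCone_smul {S : Set X} (hS : Convex ℝ S) {t : ℝ} (ht : 0 ≤ t) {y : X}
    (hy : y ∈ recCone S) : t • y ∈ recCone S := by
  intro s hs
  have hnat : ∀ m : ℕ, (m : ℝ) • y + s ∈ S := by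
    intro m
    induction m with
    | zero => simpa using hs
    | succ m ih =>
      have := hy _ ih
      have e : y + ((m:ℝ) • y + s) = ((m:ℝ)+1) • y + s := by
        rw [add_smul, one_smul]; abel
      rw [e] at this
      rwa [show ((m+1 : ℕ) : ℝ) = (m:ℝ)+1 by push_cast; ring]
  obtain ⟨n, hn⟩ := exists_nat_ge t
  have hN : t ≤ (n:ℝ) + 1 := le_trans hn (by linarith)
  have hNpos : (0:ℝ) < (n:ℝ) + 1 := by positivity
  have hb1 : (0:ℝ) ≤ 1 - t / ((n:ℝ)+1) := by
    rw [sub_nonneg]; exact (div_le_one hNpos).2 hN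
  have key := hS (a := t / ((n:ℝ)+1)) (b := 1 - t / ((n:ℝ)+1)) (hnat (n+1)) hs
    (div_nonneg ht hNpos.le) hb1 (by ring)
  have e : (t / ((n:ℝ)+1)) • (((n+1 : ℕ):ℝ) • y + s) + (1 - t / ((n:ℝ)+1)) • s
      = t • y + s := by
    push_cast
    rw [smul_add, smul_smul, div_mul_cancel₀ _ hNpos.ne', sub_smul, one_smul]
    abel
  rwa [e] at key

lemma plusCone_smul (S : Set X) {t : ℝ} (ht : 0 ≤ t) {y : X}
    (hy : y ∈ plusCone S) : t • y ∈ plusCone S := by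
  intro s hs
  rw [real_inner_smul_left]
  exact mul_nonneg ht (hy s hs)

/-- For fixed-point free `T = P_B ∘ P_A` and `R = rec A ∩ rec B`,
every cluster point of the normalized iterates `b_n/‖b_n‖` lies in `R ∩ R^⊕`, and
`R ∩ R^⊕` is a closed convex cone properly containing `{0}`. -/
theorem stmt10 (A B : Set X) (hAne : A.Nonempty) (hAcl : IsClosed A) (hAconv : Convex ℝ A)
    (hBne : B.Nonempty) (hBcl : IsClosed B) (hBconv : Convex ℝ B)
    (PA PB : X → X) (hPA : IsProjector A PA) (hPB : IsProjector B PB)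
    (T : X → X) (hT : T = PB ∘ PA) (hfix : ∀ x : X, T x ≠ x)
    (x : X) (b : ℕ → X) (hb0 : b 0 = x) (hbrec : ∀ n : ℕ, b (n + 1) = T (b n))
    (R : Set X) (hR : R = recCone A ∩ recCone B) :
    (∀ q : X, MapClusterPt q atTop (fun n : ℕ => ‖b n‖⁻¹ • b n) → q ∈ R ∩ plusCone R) ∧
    IsClosed (R ∩ plusCone R) ∧
    Convex ℝ (R ∩ plusCone R) ∧
    (∀ t : ℝ, 0 ≤ t → ∀ y ∈ R ∩ plusCone R, t • y ∈ R ∩ plusCone R) ∧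
    ({0} : Set X) ⊂ R ∩ plusCone R := by
  subst hT hR
  set f : ℕ → X := fun n => ‖b n‖⁻¹ • b n with hf
  have hbsucc : ∀ n : ℕ, b (n+1) = PB (PA (b n)) := fun n => hbrec n
  have hbB : ∀ n : ℕ, b (n+1) ∈ B := fun n => by rw [hbsucc n]; exact (hPB _).1
  -- Step inequality: inner products with recession directions are nondecreasing
  have step : ∀ r, r ∈ recCone A → r ∈ recCone B →
      ∀ n : ℕ, ⟪b n, r⟫ ≤ ⟪b (n+1), r⟫ := by
    intro r hrA hrB n
    have h1 : ⟪b n - PA (b n), r⟫ ≤ 0 := by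
      have h := var_ineq hAconv hPA (b n) (r + PA (b n)) (hrA _ (hPA (b n)).1)
      simpa using h
    have h2 : ⟪PA (b n) - b (n+1), r⟫ ≤ 0 := by
      have h := var_ineq hBconv hPB (PA (b n)) (r + PB (PA (b n)))
        (hrB _ (hPB (PA (b n))).1)
      rw [hbsucc n]
      simpa using h
    have e : ⟪b n - PA (b n), r⟫ + ⟪PA (b n) - b (n+1), r⟫
        = ⟪b n, r⟫ - ⟪b (n+1), r⟫ := by
      simp only [inner_sub_left]; ring
    linarith
  have mono : ∀ r, r ∈ recCone A → r ∈ recCone B → ∀ n : ℕ, ⟪b 0, r⟫ ≤ ⟪b n, r⟫ := by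
    intro r hrA hrB n
    induction n with
    | zero => exact le_refl _
    | succ n ih => exact ih.trans (step r hrA hrB n)
  -- distance sequences
  set d : ℕ → ℝ := fun n => ‖b (n+1) - PA (b (n+1))‖ with hd
  set e : ℕ → ℝ := fun n => ‖PA (b (n+1)) - PB (PA (b (n+1)))‖ with he
  have hde : ∀ n, d (n+1) ≤ e n := by
    intro n
    calc d (n+1) ≤ ‖b (n+2) - PA (b (n+1))‖ := (hPA (b (n+2))).2 _ (hPA (b (n+1))).1
    _ = e n := by rw [show b (n+2) = PB (PA (b (n+1))) from hbsucc (n+1)]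
                  exact norm_sub_rev _ _
  have hed : ∀ n, e n ≤ d n := fun n =>
    le_trans ((hPB (PA (b (n+1)))).2 _ (hbB n)) (le_of_eq (norm_sub_rev _ _))
  have dA : Antitone d := antitone_nat_of_succ_le fun n => (hde n).trans (hed n)
  have cPA : Continuous PA := by
    have : LipschitzWith 1 PA := LipschitzWith.of_dist_le_mul fun u v => by
      rw [dist_eq_norm, dist_eq_norm]; simpa using proj_nonexp hAconv hPA u v
    exact this.continuous
  have cPB : Continuous PB := by
    have : LipschitzWith 1 PB := LipschitzWith.of_dist_le_mul fun u v => by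
      rw [dist_eq_norm, dist_eq_norm]; simpa using proj_nonexp hBconv hPB u v
    exact this.continuous
  -- Step 3 : norms tend to infinity
  have hinf : Tendsto (fun n => ‖b n‖) atTop atTop := by
    by_contra hcon
    rw [tendsto_atTop] at hcon
    push_neg at hcon
    obtain ⟨M, hM⟩ := hcon
    have hM' : ∃ᶠ n in atTop, ‖b n‖ ≤ M := hM.mono fun n h => h.le
    obtain ⟨φ, hφmono, hφ⟩ := Filter.extraction_of_frequently_atTop hM'
    obtain ⟨p, -, ψ, hψmono, hψ⟩ := tendsto_subseq_of_bounded
      (Metric.isBounded_closedBall (x := (0:X)) (r := M))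
      (x := fun k => b (φ k))
      (fun k => by simpa [Metric.mem_closedBall, dist_zero_right] using hφ k)
    set σ : ℕ → ℕ := φ ∘ ψ with hσ
    have hσb : Tendsto (fun k => b (σ k)) atTop (𝓝 p) := hψ
    have hσtop : Tendsto σ atTop atTop := (hφmono.comp hψmono).tendsto_atTop
    have hbdd : BddBelow (Set.range d) := ⟨0, by rintro _ ⟨n, rfl⟩; exact norm_nonneg _⟩
    set L := ⨅ n, d n with hL
    have hdL : Tendsto d atTop (𝓝 L) := tendsto_atTop_ciInf dA hbdd
    have heL : Tendsto e atTop (𝓝 L) := by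
      have h1 : Tendsto (fun n => d (n+1)) atTop (𝓝 L) :=
        hdL.comp (tendsto_add_atTop_nat 1)
      exact tendsto_of_tendsto_of_tendsto_of_le_of_le h1 hdL hde hed
    set p1 := PB (PA p) with hp1
    set u := PA p1 with hu
    set z := PB u with hz
    -- auxiliary limits
    have hA1 : Tendsto (fun k => PA (PB (PA (b (σ k))))) atTop (𝓝 u) :=
      (cPA.tendsto _).comp (((cPB.comp cPA).tendsto p).comp hσb)
    have hA2 : Tendsto (fun k => PB (PA (PB (PA (b (σ k)))))) atTop (𝓝 z) :=
      (cPB.tendsto _).comp hA1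
    have heq2 : ‖u - z‖ = L := by
      have h1 : Tendsto (fun k => e (σ k)) atTop (𝓝 ‖u - z‖) := by
        have h2 := (hA1.sub hA2).norm
        refine h2.congr fun k => ?_
        show ‖_ - _‖ = e (σ k)
        rw [he]
        simp only [hbsucc (σ k)]
      exact tendsto_nhds_unique h1 (heL.comp hσtop)
    have heq3 : ‖z - PA z‖ = L := by
      have h1 : Tendsto (fun k => d (σ k + 1)) atTop (𝓝 ‖z - PA z‖) := by
        have h2 := (hA2.sub ((cPA.tendsto _).comp hA2)).norm
        simp only [Function.comp_apply] at h2
        refine h2.congr fun k => ?_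
        show ‖_ - _‖ = d (σ k + 1)
        rw [hd]
        simp only [hbsucc (σ k + 1), hbsucc (σ k)]
      exact tendsto_nhds_unique h1 (hdL.comp ((tendsto_add_atTop_nat 1).comp hσtop))
    have hminA : ∀ w ∈ A, ‖z - u‖ ≤ ‖z - w‖ := by
      intro w hw
      have : ‖z - u‖ = ‖z - PA z‖ := by rw [heq3, ← heq2, norm_sub_rev]
      rw [this]
      exact (hPA z).2 w hw
    have hPAz : PA z = u := proj_eq_of_min hAconv hPA (hPA p1).1 hminA
    exact hfix z (by show PB (PA z) = z; rw [hPAz, hz])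
  -- Step 4 : cluster points
  have hcluster : ∀ q : X, MapClusterPt q atTop f →
      q ∈ (recCone A ∩ recCone B) ∩ plusCone (recCone A ∩ recCone B) := by
    intro q hq
    obtain ⟨ψ, hψmono, hψ⟩ := TopologicalSpace.FirstCountableTopology.tendsto_subseq hq
    have hψtop : Tendsto ψ atTop atTop := hψmono.tendsto_atTop
    have hnb : Tendsto (fun k => ‖b (ψ k)‖) atTop atTop := hinf.comp hψtop
    have ht0 : Tendsto (fun k => ‖b (ψ k)‖⁻¹) atTop (𝓝 0) :=
      tendsto_inv_atTop_zero.comp hnb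
    have hev1 : ∀ᶠ k in atTop, 1 ≤ ‖b (ψ k)‖ := hnb.eventually_ge_atTop 1
    have hev2 : ∀ᶠ k in atTop, 1 ≤ ψ k := hψtop.eventually_ge_atTop 1
    have htnonneg : ∀ k, (0:ℝ) ≤ ‖b (ψ k)‖⁻¹ := fun k => inv_nonneg.2 (norm_nonneg _)
    have hψ' : Tendsto (fun k => ‖b (ψ k)‖⁻¹ • b (ψ k)) atTop (𝓝 q) := hψ
    -- recCone B
    have hrecB : q ∈ recCone B := by
      intro s hs
      have hz : ∀ᶠ k in atTop,
          (1 - ‖b (ψ k)‖⁻¹) • s + ‖b (ψ k)‖⁻¹ • b (ψ k) ∈ B := by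
        filter_upwards [hev1, hev2] with k h1 h2
        obtain ⟨m, hm⟩ : ∃ m, ψ k = m + 1 := ⟨ψ k - 1, by omega⟩
        have hbk : b (ψ k) ∈ B := by rw [hm]; exact hbB m
        have hti : ‖b (ψ k)‖⁻¹ ≤ 1 := by
          rw [inv_le_one_iff₀]; right; exact h1
        exact hBconv hs hbk (by linarith) (htnonneg k) (by ring)
      have hzt : Tendsto
          (fun k => (1 - ‖b (ψ k)‖⁻¹) • s + ‖b (ψ k)‖⁻¹ • b (ψ k)) atTop (𝓝 (s + q)) := by
        have h2 : Tendsto (fun k => (1 - ‖b (ψ k)‖⁻¹) • s) atTop (𝓝 s) := by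
          have h3 := ((tendsto_const_nhds (x := (1:ℝ)) (f := atTop)).sub ht0).smul_const s
          simpa using h3
        exact h2.add hψ'
      have := hBcl.mem_of_tendsto hzt hz
      rwa [add_comm] at this
    -- recCone A
    have hbndA : ∀ k, 1 ≤ ψ k → ‖PA (b (ψ k)) - b (ψ k)‖ ≤ d 0 := by
      intro k hk
      obtain ⟨m, hm⟩ : ∃ m, ψ k = m + 1 := ⟨ψ k - 1, by omega⟩
      rw [hm, norm_sub_rev]
      exact dA (Nat.zero_le m)
    have hgA : Tendsto (fun k => ‖b (ψ k)‖⁻¹ • PA (b (ψ k))) atTop (𝓝 q) := by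
      have hdiff : Tendsto
          (fun k => ‖b (ψ k)‖⁻¹ • PA (b (ψ k)) - ‖b (ψ k)‖⁻¹ • b (ψ k)) atTop (𝓝 0) := by
        apply squeeze_zero_norm' (a := fun k => ‖b (ψ k)‖⁻¹ * d 0)
        · filter_upwards [hev2] with k hk
          rw [← smul_sub, norm_smul, norm_inv, norm_norm]
          exact mul_le_mul_of_nonneg_left (hbndA k hk) (htnonneg k)
        · simpa using ht0.mul_const (d 0)
      have h4 := hdiff.add hψ'
      rw [zero_add] at h4
      refine h4.congr fun k => ?_
      abel
    have hrecA : q ∈ recCone A := by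
      intro s hs
      have hz : ∀ᶠ k in atTop,
          (1 - ‖b (ψ k)‖⁻¹) • s + ‖b (ψ k)‖⁻¹ • PA (b (ψ k)) ∈ A := by
        filter_upwards [hev1] with k h1
        have hti : ‖b (ψ k)‖⁻¹ ≤ 1 := by
          rw [inv_le_one_iff₀]; right; exact h1
        exact hAconv hs (hPA (b (ψ k))).1 (by linarith) (htnonneg k) (by ring)
      have hzt : Tendsto
          (fun k => (1 - ‖b (ψ k)‖⁻¹) • s + ‖b (ψ k)‖⁻¹ • PA (b (ψ k))) atTop
          (𝓝 (s + q)) := by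
        have h2 : Tendsto (fun k => (1 - ‖b (ψ k)‖⁻¹) • s) atTop (𝓝 s) := by
          have h3 := ((tendsto_const_nhds (x := (1:ℝ)) (f := atTop)).sub ht0).smul_const s
          simpa using h3
        exact h2.add hgA
      have := hAcl.mem_of_tendsto hzt hz
      rwa [add_comm] at this
    -- plusCone
    have hplus : q ∈ plusCone (recCone A ∩ recCone B) := by
      intro r hr
      have hle : ∀ k, ‖b (ψ k)‖⁻¹ * ⟪b 0, r⟫ ≤ ⟪‖b (ψ k)‖⁻¹ • b (ψ k), r⟫ := by
        intro k
        rw [real_inner_smul_left]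
        exact mul_le_mul_of_nonneg_left (mono r hr.1 hr.2 (ψ k)) (htnonneg k)
      have hLt : Tendsto (fun k => ‖b (ψ k)‖⁻¹ * ⟪b 0, r⟫) atTop (𝓝 0) := by
        simpa using ht0.mul_const (⟪b 0, r⟫)
      have hRt : Tendsto (fun k => ⟪‖b (ψ k)‖⁻¹ • b (ψ k), r⟫) atTop (𝓝 ⟪q, r⟫) :=
        hψ'.inner tendsto_const_nhds
      exact le_of_tendsto_of_tendsto' hLt hRt hle
    exact ⟨⟨hrecA, hrecB⟩, hplus⟩
  refine ⟨hcluster,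
    ((recCone_closed hAcl).inter (recCone_closed hBcl)).inter (plusCone_closed _),
    ((recCone_convex hAconv).inter (recCone_convex hBconv)).inter (plusCone_convex _),
    fun t ht y hy => ⟨⟨recCone_smul hAconv ht hy.1.1, recCone_smul hBconv ht hy.1.2⟩,
      plusCone_smul _ ht hy.2⟩, ?_⟩
  -- the proper inclusion
  have h0mem : (0:X) ∈ (recCone A ∩ recCone B) ∩ plusCone (recCone A ∩ recCone B) :=
    ⟨⟨fun s hs => by simpa, fun s hs => by simpa⟩, fun s hs => by simp⟩
  have hfball : ∀ n, f n ∈ Metric.closedBall (0:X) 1 := by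
    intro n
    rw [Metric.mem_closedBall, dist_zero_right]
    rcases eq_or_ne (b n) 0 with h | h
    · simp [hf, h]
    · show ‖‖b n‖⁻¹ • b n‖ ≤ 1
      rw [norm_smul, norm_inv, norm_norm, inv_mul_cancel₀ (norm_ne_zero_iff.2 h)]
  obtain ⟨q0, -, hq0⟩ := (isCompact_closedBall (0:X) 1).exists_mapClusterPt
    (u := f) (f := atTop)
    (by rw [Filter.le_principal_iff, Filter.mem_map]
        exact Filter.Eventually.of_forall hfball)
  have hq0mem := hcluster q0 hq0
  obtain ⟨ψ, hψmono, hψ⟩ := TopologicalSpace.FirstCountableTopology.tendsto_subseq hq0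
  have hnb : Tendsto (fun k => ‖b (ψ k)‖) atTop atTop := hinf.comp hψmono.tendsto_atTop
  have hnorm1 : Tendsto (fun k => ‖f (ψ k)‖) atTop (𝓝 ‖q0‖) := hψ.norm
  have hev : ∀ᶠ k in atTop, ‖f (ψ k)‖ = 1 := by
    filter_upwards [hnb.eventually_ge_atTop 1] with k hk
    have hne : ‖b (ψ k)‖ ≠ 0 := by positivity
    show ‖‖b (ψ k)‖⁻¹ • b (ψ k)‖ = 1
    rw [norm_smul, norm_inv, norm_norm, inv_mul_cancel₀ hne]
  have hq0norm : ‖q0‖ = 1 := by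
    refine tendsto_nhds_unique hnorm1 (tendsto_const_nhds.congr' ?_)
    filter_upwards [hev] with k hk
    exact hk.symm
  rw [Set.ssubset_iff_of_subset (Set.singleton_subset_iff.2 h0mem)]
  refine ⟨q0, hq0mem, ?_⟩
  simp only [Set.mem_singleton_iff]
  intro h
  rw [h] at hq0norm
  simp at hq0norm
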